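/- arXiv:1603.09412 — 2 statements merged into one kernel-verified Lean document; each statement's English description precedes it below -/
import Mathlib

section
/- Let j ≥ 1 and k be integers. Then the Fourier expansion of the eta quotient C_{j,k}(z) in q = e^{2πiz} has the form C_{j,k}(z) = q^j + ∑_{n=j+1}^∞ c_{j,k}(n) q^n; that is, the coefficient of q^n vanishes for all 0 ≤ n < j and the coefficient of q^j equals 1. -/
open Complex UpperHalfPlane Filter

/-- The Dedekind eta function `η(z) = e^{πiz/12} ∏_{n=1}^∞ (1 − e^{2πinz})`. -/
noncomputable def dedekindEta (z : ℂ) : ℂ :=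
  Complex.exp (Real.pi * Complex.I * z / 12) *
    ∏' n : ℕ, (1 - Complex.exp (2 * Real.pi * Complex.I * ((n : ℂ) + 1) * z))

/-- The eta quotient `C_{j,k}(z)` of the paper. -/
noncomputable def Cq (j k : ℤ) (z : ℂ) : ℂ :=
  (dedekindEta (2 * z) ^ 10 * dedekindEta (3 * z) ^ 5 * dedekindEta (4 * z) *
      dedekindEta (6 * z) ^ 2 /
      (dedekindEta z ^ 15 * dedekindEta (12 * z) ^ 3)) *
  (dedekindEta (2 * z) ^ 2 * dedekindEta (3 * z) * dedekindEta (12 * z) ^ 3 /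
      (dedekindEta z ^ 3 * dedekindEta (4 * z) * dedekindEta (6 * z) ^ 2)) ^ j *
  (dedekindEta z ^ 6 * dedekindEta (6 * z) /
      (dedekindEta (2 * z) ^ 3 * dedekindEta (3 * z) ^ 2)) ^ k

section EtaAux

open Metric


noncomputable def etaL (x : ℂ) : ℂ := ∑' n : ℕ, Complex.log (1 - x ^ (n + 1))

lemma etaL_bound {r : ℝ} (hr : r < 1) {x : ℂ} (hx : ‖x‖ ≤ r) (n : ℕ) :
    ‖Complex.log (1 - x ^ (n + 1))‖ ≤ (r * (1 - r)⁻¹ / 2 + 1) * r ^ (n + 1) := by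
  have hr0 : 0 ≤ r := le_trans (norm_nonneg x) hx
  set w : ℝ := ‖x‖ ^ (n + 1) with hwdef
  have hw0 : 0 ≤ w := pow_nonneg (norm_nonneg x) _
  have hwrn : w ≤ r ^ (n + 1) := pow_le_pow_left₀ (norm_nonneg x) hx _
  have hrnr : r ^ (n + 1) ≤ r := by
    calc r ^ (n + 1) ≤ r ^ 1 := pow_le_pow_of_le_one hr0 hr.le (by omega)
    _ = r := pow_one r
  have hwr : w ≤ r := hwrn.trans hrnr
  have hw1 : w < 1 := lt_of_le_of_lt hwr hr
  have hnorm : ‖(-(x ^ (n + 1)) : ℂ)‖ = w := by rw [norm_neg, norm_pow]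
  have hlt : ‖(-(x ^ (n + 1)) : ℂ)‖ < 1 := by rw [hnorm]; exact hw1
  have hlog := Complex.norm_log_one_add_le hlt
  rw [hnorm] at hlog
  have heq : (1 : ℂ) + -(x ^ (n + 1)) = 1 - x ^ (n + 1) := by ring
  rw [heq] at hlog
  have hinv : (1 - w)⁻¹ ≤ (1 - r)⁻¹ := by
    apply inv_anti₀ (by linarith) (by linarith)
  have h1 : w ^ 2 * (1 - w)⁻¹ ≤ (w * r) * (1 - r)⁻¹ := by
    apply mul_le_mul _ hinv (inv_nonneg.2 (by linarith)) (by positivity)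
    rw [sq]
    exact mul_le_mul_of_nonneg_left hwr hw0
  have h2 : (w * r) * (1 - r)⁻¹ ≤ (r ^ (n + 1) * r) * (1 - r)⁻¹ := by
    apply mul_le_mul_of_nonneg_right _ (inv_nonneg.2 (by linarith))
    exact mul_le_mul_of_nonneg_right hwrn hr0
  calc ‖Complex.log (1 - x ^ (n + 1))‖ ≤ w ^ 2 * (1 - w)⁻¹ / 2 + w := hlog
    _ ≤ (r ^ (n + 1) * r) * (1 - r)⁻¹ / 2 + r ^ (n + 1) := by linarith
    _ = (r * (1 - r)⁻¹ / 2 + 1) * r ^ (n + 1) := by ring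

lemma summable_aux {r : ℝ} (hr0 : 0 ≤ r) (hr : r < 1) (C : ℝ) :
    Summable fun n : ℕ => C * r ^ (n + 1) := by
  have := (summable_geometric_of_lt_one hr0 hr).mul_left (C * r)
  refine this.congr fun n => ?_
  rw [pow_succ]; ring

lemma summable_etaL_log {x : ℂ} (hx : ‖x‖ < 1) :
    Summable fun n : ℕ => Complex.log (1 - x ^ (n + 1)) := by
  apply Summable.of_norm
  exact Summable.of_nonneg_of_le (fun n => norm_nonneg _)
    (fun n => etaL_bound hx le_rfl n)
    (summable_aux (norm_nonneg x) hx _)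

lemma exp_etaL {x : ℂ} (hx : ‖x‖ < 1) :
    Complex.exp (etaL x) = ∏' n : ℕ, (1 - x ^ (n + 1)) := by
  have h := Complex.cexp_tsum_eq_tprod (ι := ℕ)
    (f := fun n => 1 - (x : ℂ) ^ (n + 1)) ?_ ?_
  · exact h
  · intro n
    have hn : ‖(x : ℂ) ^ (n + 1)‖ < 1 := by
      rw [norm_pow]; exact pow_lt_one₀ (norm_nonneg _) hx (by omega)
    intro h0
    rw [sub_eq_zero] at h0
    rw [← h0] at hn
    simp at hn
  · exact summable_etaL_log hx

lemma etaL_zero : etaL 0 = 0 := by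
  simp [etaL]

lemma etaL_diff : DifferentiableOn ℂ etaL (Metric.ball 0 1) := by
  intro x hx
  rw [mem_ball, dist_zero_right] at hx
  set r : ℝ := (‖x‖ + 1) / 2 with hrdef
  have hr1 : r < 1 := by rw [hrdef]; linarith
  have hxr : ‖x‖ < r := by rw [hrdef]; linarith
  have hr0 : 0 ≤ r := by positivity
  have hd : DifferentiableOn ℂ etaL (Metric.ball 0 r) := by
    apply differentiableOn_tsum_of_summable_norm
      (u := fun n : ℕ => (r * (1 - r)⁻¹ / 2 + 1) * r ^ (n + 1))
      (F := fun (n : ℕ) (w : ℂ) => Complex.log (1 - w ^ (n + 1)))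
    · exact summable_aux hr0 hr1 _
    · intro i w hw
      rw [mem_ball, dist_zero_right] at hw
      apply DifferentiableAt.differentiableWithinAt
      apply DifferentiableAt.clog (by fun_prop)
      have hwn : ‖(-(w ^ (i + 1)) : ℂ)‖ < 1 := by
        rw [norm_neg, norm_pow]
        exact pow_lt_one₀ (norm_nonneg _) (hw.trans_le hr1.le) (by omega)
      have := Complex.mem_slitPlane_of_norm_lt_one hwn
      rwa [show (1 : ℂ) + -(w ^ (i + 1)) = 1 - w ^ (i + 1) by ring] at this
    · exact isOpen_ball
    · intro i w hw
      rw [mem_ball, dist_zero_right] at hw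
      exact etaL_bound hr1 hw.le i
  exact (hd.differentiableAt (isOpen_ball.mem_nhds (by rw [mem_ball, dist_zero_right]; exact hxr))).differentiableWithinAt

noncomputable def etaM (j k : ℤ) (x : ℂ) : ℂ :=
  (10 * etaL (x ^ 2) + 5 * etaL (x ^ 3) + etaL (x ^ 4) + 2 * etaL (x ^ 6)
      - 15 * etaL x - 3 * etaL (x ^ 12))
  + (j : ℂ) * (2 * etaL (x ^ 2) + etaL (x ^ 3) + 3 * etaL (x ^ 12)
      - 3 * etaL x - etaL (x ^ 4) - 2 * etaL (x ^ 6))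
  + (k : ℂ) * (6 * etaL x + etaL (x ^ 6) - 3 * etaL (x ^ 2) - 2 * etaL (x ^ 3))

lemma etaL_comp_pow_diff (m : ℕ) (hm : m ≠ 0) :
    DifferentiableOn ℂ (fun x : ℂ => etaL (x ^ m)) (Metric.ball 0 1) := by
  intro x hx
  rw [mem_ball, dist_zero_right] at hx
  have hxm : x ^ m ∈ Metric.ball (0 : ℂ) 1 := by
    rw [mem_ball, dist_zero_right, norm_pow]
    exact pow_lt_one₀ (norm_nonneg _) hx hm
  have h1 : DifferentiableAt ℂ etaL (x ^ m) :=
    etaL_diff.differentiableAt (isOpen_ball.mem_nhds hxm)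
  have h2 : DifferentiableAt ℂ (fun y : ℂ => y ^ m) x := differentiableAt_pow m
  have := h1.comp x h2
  exact this.differentiableWithinAt

lemma etaM_diff (j k : ℤ) : DifferentiableOn ℂ (etaM j k) (Metric.ball 0 1) := by
  have h1 : DifferentiableOn ℂ etaL (Metric.ball (0:ℂ) 1) := etaL_diff
  have h2 := etaL_comp_pow_diff 2 (by norm_num)
  have h3 := etaL_comp_pow_diff 3 (by norm_num)
  have h4 := etaL_comp_pow_diff 4 (by norm_num)
  have h6 := etaL_comp_pow_diff 6 (by norm_num)
  have h12 := etaL_comp_pow_diff 12 (by norm_num)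
  unfold etaM
  apply DifferentiableOn.add
  apply DifferentiableOn.add
  · exact (((((h2.const_mul 10).add (h3.const_mul 5)).add h4).add
      (h6.const_mul 2)).sub (h1.const_mul 15)).sub (h12.const_mul 3)
  · exact DifferentiableOn.const_mul ((((((h2.const_mul 2).add h3).add
      (h12.const_mul 3)).sub (h1.const_mul 3)).sub h4).sub (h6.const_mul 2)) _
  · exact DifferentiableOn.const_mul
      ((((h1.const_mul 6).add h6).sub (h2.const_mul 3)).sub (h3.const_mul 2)) _

lemma etaM_zero (j k : ℤ) : etaM j k 0 = 0 := by
  simp [etaM, etaL_zero]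

lemma norm_q_lt_one {τ : ℂ} (hτ : 0 < τ.im) :
    ‖Complex.exp (2 * (Real.pi : ℂ) * Complex.I * τ)‖ < 1 := by
  rw [Complex.norm_exp, Real.exp_lt_one_iff]
  have hre : (2 * (Real.pi : ℂ) * Complex.I * τ).re = -(2 * Real.pi * τ.im) := by
    simp [Complex.mul_re, Complex.mul_im]
    try ring
  rw [hre]
  have := Real.pi_pos
  nlinarith

lemma dedekindEta_eq {τ : ℂ} (hτ : 0 < τ.im) (m : ℕ) (hm : m ≠ 0) :
    dedekindEta ((m : ℂ) * τ) =
      Complex.exp ((m : ℂ) * ((Real.pi : ℂ) * Complex.I * τ) / 12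
        + etaL (Complex.exp (2 * (Real.pi : ℂ) * Complex.I * τ) ^ m)) := by
  have hq : ‖Complex.exp (2 * (Real.pi : ℂ) * Complex.I * τ)‖ < 1 := norm_q_lt_one hτ
  have hqm : ‖Complex.exp (2 * (Real.pi : ℂ) * Complex.I * τ) ^ m‖ < 1 := by
    rw [norm_pow]; exact pow_lt_one₀ (norm_nonneg _) hq hm
  rw [dedekindEta, Complex.exp_add, exp_etaL hqm]
  congr 1
  · congr 1; ring
  · refine tprod_congr fun n => ?_
    congr 1
    rw [← pow_mul, ← Complex.exp_nat_mul]
    congr 1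
    push_cast
    ring

lemma Cq_eq (j k : ℤ) {τ : ℂ} (hτ : 0 < τ.im) :
    Cq j k τ = Complex.exp (2 * (Real.pi : ℂ) * Complex.I * τ) ^ j *
      Complex.exp (etaM j k (Complex.exp (2 * (Real.pi : ℂ) * Complex.I * τ))) := by
  have e1 : dedekindEta τ =
      Complex.exp (1 * ((Real.pi : ℂ) * Complex.I * τ) / 12
        + etaL (Complex.exp (2 * (Real.pi : ℂ) * Complex.I * τ) ^ 1)) := by
    simpa using dedekindEta_eq hτ 1 one_ne_zero
  have e2 : dedekindEta (2 * τ) =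
      Complex.exp (2 * ((Real.pi : ℂ) * Complex.I * τ) / 12
        + etaL (Complex.exp (2 * (Real.pi : ℂ) * Complex.I * τ) ^ 2)) := by
    simpa using dedekindEta_eq hτ 2 (by norm_num)
  have e3 : dedekindEta (3 * τ) =
      Complex.exp (3 * ((Real.pi : ℂ) * Complex.I * τ) / 12
        + etaL (Complex.exp (2 * (Real.pi : ℂ) * Complex.I * τ) ^ 3)) := by
    simpa using dedekindEta_eq hτ 3 (by norm_num)
  have e4 : dedekindEta (4 * τ) =
      Complex.exp (4 * ((Real.pi : ℂ) * Complex.I * τ) / 12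
        + etaL (Complex.exp (2 * (Real.pi : ℂ) * Complex.I * τ) ^ 4)) := by
    simpa using dedekindEta_eq hτ 4 (by norm_num)
  have e6 : dedekindEta (6 * τ) =
      Complex.exp (6 * ((Real.pi : ℂ) * Complex.I * τ) / 12
        + etaL (Complex.exp (2 * (Real.pi : ℂ) * Complex.I * τ) ^ 6)) := by
    simpa using dedekindEta_eq hτ 6 (by norm_num)
  have e12 : dedekindEta (12 * τ) =
      Complex.exp (12 * ((Real.pi : ℂ) * Complex.I * τ) / 12
        + etaL (Complex.exp (2 * (Real.pi : ℂ) * Complex.I * τ) ^ 12)) := by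
    simpa using dedekindEta_eq hτ 12 (by norm_num)
  rw [Cq, e1, e2, e3, e4, e6, e12]
  simp only [← Complex.exp_nat_mul, ← Complex.exp_int_mul, ← Complex.exp_add,
    ← Complex.exp_sub]
  congr 1
  rw [etaM]
  simp only [← Complex.exp_nat_mul]
  push_cast [one_mul]
  ring

lemma etaG_hasSum (j k : ℤ) :
    ∃ p : FormalMultilinearSeries ℂ ℂ ℂ, p.coeff 0 = 1 ∧
      ∀ q : ℂ, ‖q‖ < 1 → HasSum (fun n : ℕ => p.coeff n * q ^ n)
        (Complex.exp (etaM j k q)) := by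
  set G : ℂ → ℂ := fun x => Complex.exp (etaM j k x) with hG
  have hGd : DifferentiableOn ℂ G (Metric.ball 0 1) := (etaM_diff j k).cexp
  have hp : ∀ R : NNReal, 0 < R → (R : ℝ) < 1 →
      HasFPowerSeriesOnBall G (cauchyPowerSeries G 0 R) 0 R := fun R hR0 hR1 =>
    (hGd.mono (Metric.closedBall_subset_ball hR1)).hasFPowerSeriesOnBall hR0
  set p : FormalMultilinearSeries ℂ ℂ ℂ := cauchyPowerSeries G 0 (1/2 : NNReal) with hpdef
  have hp2 : HasFPowerSeriesOnBall G p 0 (1/2 : NNReal) :=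
    hp (1/2) (by norm_num) (by norm_num)
  refine ⟨p, ?_, ?_⟩
  · have h0 := hp2.coeff_zero (fun _ => 1)
    have hG0 : G 0 = 1 := by simp [hG, etaM_zero]
    rw [hG0] at h0
    exact h0
  · intro q hq
    set R : NNReal := ⟨(‖q‖ + 1) / 2, by positivity⟩ with hRdef
    have hRcoe : (R : ℝ) = (‖q‖ + 1) / 2 := rfl
    have hR0 : 0 < R := by
      rw [← NNReal.coe_lt_coe, hRcoe, NNReal.coe_zero]
      positivity
    have hR1 : (R : ℝ) < 1 := by rw [hRcoe]; linarith
    have hqR : ‖q‖ < (R : ℝ) := by rw [hRcoe]; linarith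
    have hpr := hp R hR0 hR1
    have heq : cauchyPowerSeries G 0 R = p :=
      hpr.hasFPowerSeriesAt.eq_formalMultilinearSeries hp2.hasFPowerSeriesAt
    have hmem : q ∈ Metric.eball (0 : ℂ) R := by
      rw [Metric.mem_eball, edist_zero_right]
      exact_mod_cast hqR
    have hs := hpr.hasSum hmem
    rw [heq, zero_add] at hs
    have hterm : ∀ n : ℕ, (p n fun _ => q) = p.coeff n * q ^ n := fun n => by
      rw [FormalMultilinearSeries.apply_eq_pow_smul_coeff, smul_eq_mul]; ring
    simp only [hterm] at hs
    exact hs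


end EtaAux

/-- For `j ≥ 1` the `q`-expansion of `C_{j,k}` has the form
`q^j + ∑_{n ≥ j+1} c_{j,k}(n) q^n`. -/
theorem Cq_qExpansion (j k : ℤ) (hj : 1 ≤ j) :
    ∃ c : ℤ → ℂ, ∀ z : UpperHalfPlane,
      Cq j k (z : ℂ) =
        Complex.exp (2 * Real.pi * Complex.I * (z : ℂ)) ^ j +
          ∑' n : ℕ, c (j + 1 + n) *
            Complex.exp (2 * Real.pi * Complex.I * (z : ℂ)) ^ (j + 1 + (n : ℤ)) := by
  obtain ⟨p, hp0, hps⟩ := etaG_hasSum j k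
  refine ⟨fun m => p.coeff (m - j).toNat, fun z => ?_⟩
  have him : 0 < (z : ℂ).im := by
    rw [UpperHalfPlane.coe_im]; exact z.im_pos
  set q : ℂ := Complex.exp (2 * Real.pi * Complex.I * (z : ℂ)) with hqdef
  have hqlt : ‖q‖ < 1 := norm_q_lt_one him
  have hq0 : q ≠ 0 := Complex.exp_ne_zero _
  have hsum := hps q hqlt
  have h1 : HasSum (fun n : ℕ => p.coeff (n + 1) * q ^ (n + 1))
      (Complex.exp (etaM j k q) - 1) := by
    have h := (hasSum_nat_add_iff' (f := fun n : ℕ => p.coeff n * q ^ n) 1).mpr hsum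
    simpa [hp0] using h
  have h2 := h1.mul_left (q ^ j)
  have hterm : ∀ n : ℕ,
      p.coeff ((j + 1 + (n : ℤ)) - j).toNat * q ^ (j + 1 + (n : ℤ)) =
        q ^ j * (p.coeff (n + 1) * q ^ (n + 1)) := by
    intro n
    have hc : ((j + 1 + (n : ℤ)) - j).toNat = n + 1 := by omega
    have hz : q ^ (j + 1 + (n : ℤ)) = q ^ j * q ^ (n + 1 : ℕ) := by
      rw [← zpow_natCast q (n + 1), ← zpow_add₀ hq0]
      congr 1
      push_cast
      ring
    rw [hc, hz]
    ring
  have hCq : Cq j k (z : ℂ) = q ^ j * Complex.exp (etaM j k q) := Cq_eq j k him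
  rw [hCq, tsum_congr hterm, h2.tsum_eq]
  ring
end

section
/- Let k ≥ 2 be an integer. Then the functions C_{1,2k}(z), C_{2,2k}(z), …, C_{4k−5,2k}(z) are linearly independent over ℂ as functions on the upper half plane. -/
open Complex UpperHalfPlane Filter

namespace CqLIAux

open Real

lemma pow_le_half {u : ℝ} (h0 : 0 ≤ u) (h1 : u ≤ 1/2) (n : ℕ) : u ^ (n+1) ≤ 1/2 :=
  le_trans (pow_le_of_le_one h0 (by linarith) n.succ_ne_zero) h1

lemma log_bound {u : ℝ} (h0 : 0 ≤ u) (h1 : u ≤ 1/2) (n : ℕ) :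
    ‖Real.log (1 - u ^ (n+1))‖ ≤ 2 * u ^ (n+1) := by
  have hx0 : 0 ≤ u ^ (n+1) := pow_nonneg h0 _
  have hx1 : u ^ (n+1) ≤ 1/2 := pow_le_half h0 h1 n
  have hpos : 0 < 1 - u ^ (n+1) := by linarith
  have hle : Real.log (1 - u ^ (n+1)) ≤ 0 := Real.log_nonpos (by linarith) (by linarith)
  rw [Real.norm_eq_abs, abs_of_nonpos hle, ← Real.log_inv]
  have h2 := Real.log_le_sub_one_of_pos (inv_pos.mpr hpos)
  have h3 : (1 - u ^ (n+1)) * (1 - u ^ (n+1))⁻¹ = 1 := mul_inv_cancel₀ (ne_of_gt hpos)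
  nlinarith [hx0, hx1]

lemma summable_log {u : ℝ} (h0 : 0 ≤ u) (h1 : u ≤ 1/2) :
    Summable (fun n : ℕ => Real.log (1 - u ^ (n+1))) := by
  have hg : Summable (fun n : ℕ => u ^ n) := summable_geometric_of_lt_one h0 (by linarith)
  exact Summable.of_norm_bounded ((hg.mul_left (2*u)).congr (fun n => by ring)) (log_bound h0 h1)

lemma tsum_log_bound {u : ℝ} (h0 : 0 ≤ u) (h1 : u ≤ 1/2) :
    |∑' n : ℕ, Real.log (1 - u ^ (n+1))| ≤ 4 * u := by
  have hg : Summable (fun n : ℕ => u ^ n) := summable_geometric_of_lt_one h0 (by linarith)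
  have hb : Summable (fun n : ℕ => 2 * u ^ (n+1)) :=
    (hg.mul_left (2*u)).congr (fun n => by ring)
  have h4 : |∑' n : ℕ, Real.log (1 - u ^ (n+1))| ≤ ∑' n : ℕ, |Real.log (1 - u ^ (n+1))| := by
    simpa [Real.norm_eq_abs] using
      norm_tsum_le_tsum_norm (f := fun n : ℕ => Real.log (1 - u ^ (n+1)))
        (by simpa [Real.norm_eq_abs] using (summable_log h0 h1).abs)
  have h5 : ∑' n : ℕ, |Real.log (1 - u ^ (n+1))| ≤ ∑' n : ℕ, 2 * u ^ (n+1) := by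
    refine Summable.tsum_le_tsum (fun n => ?_) ((summable_log h0 h1).abs) hb
    simpa [Real.norm_eq_abs] using log_bound h0 h1 n
  have h6 : ∑' n : ℕ, 2 * u ^ (n+1) = 2 * u * (1 - u)⁻¹ := by
    rw [show (fun n : ℕ => 2 * u ^ (n+1)) = fun n : ℕ => (2*u) * u ^ n from funext fun n => by ring,
      tsum_mul_left, tsum_geometric_of_lt_one h0 (by linarith)]
  have h7 : (1 - u)⁻¹ ≤ 2 := by
    rw [show (2:ℝ) = (1/2 : ℝ)⁻¹ by norm_num]
    exact inv_anti₀ (by norm_num) (by linarith)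
  calc |∑' n : ℕ, Real.log (1 - u ^ (n+1))| ≤ ∑' n : ℕ, 2 * u ^ (n+1) := h4.trans h5
    _ = 2 * u * (1 - u)⁻¹ := h6
    _ ≤ 4 * u := by nlinarith

lemma hasProd_one_sub {u : ℝ} (h0 : 0 ≤ u) (h1 : u ≤ 1/2) :
    HasProd (fun n : ℕ => (1:ℝ) - u ^ (n+1))
      (Real.exp (∑' n : ℕ, Real.log (1 - u ^ (n+1)))) := by
  have h := (summable_log h0 h1).hasSum.rexp
  have he : (rexp ∘ fun n : ℕ => Real.log (1 - u ^ (n+1))) = fun n : ℕ => (1:ℝ) - u ^ (n+1) := by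
    funext n
    have hx1 : u ^ (n+1) ≤ 1/2 := pow_le_half h0 h1 n
    exact Real.exp_log (by linarith)
  rwa [he] at h

/-- The logarithm of the eta-type infinite product at `is`. -/
noncomputable def SS (s : ℝ) : ℝ := ∑' n : ℕ, Real.log (1 - Real.exp (-(2 * π * s)) ^ (n + 1))

lemma u_half {s : ℝ} (hs : 1 ≤ s) : Real.exp (-(2 * π * s)) ≤ 1/2 := by
  have h1 : Real.exp (-(2 * π * s)) ≤ Real.exp (-1) := by
    apply Real.exp_le_exp.mpr
    nlinarith [Real.pi_gt_three]
  have h2 : Real.exp (-1) = (Real.exp 1)⁻¹ := Real.exp_neg 1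
  have h3 : (2:ℝ) ≤ Real.exp 1 := by nlinarith [Real.add_one_le_exp 1]
  have h4 : (Real.exp 1)⁻¹ ≤ (2:ℝ)⁻¹ := inv_anti₀ (by norm_num) h3
  rw [h2] at h1
  calc Real.exp (-(2*π*s)) ≤ (Real.exp 1)⁻¹ := h1
    _ ≤ (2:ℝ)⁻¹ := h4
    _ = 1/2 := by norm_num

lemma tendsto_exp_neg_const_mul {c : ℝ} (hc : 0 < c) :
    Tendsto (fun t : ℝ => Real.exp (-(c * t))) atTop (nhds 0) :=
  Real.tendsto_exp_neg_atTop_nhds_zero.comp (Tendsto.const_mul_atTop hc tendsto_id)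

lemma tendsto_SS : Tendsto SS atTop (nhds 0) := by
  refine squeeze_zero_norm' ?_ ?_ (a := fun s : ℝ => 4 * Real.exp (-(2 * π * s)))
  · filter_upwards [eventually_ge_atTop (1:ℝ)] with s hs
    simpa [Real.norm_eq_abs, SS] using tsum_log_bound (Real.exp_pos _).le (u_half hs)
  · simpa using (tendsto_exp_neg_const_mul (by positivity : (0:ℝ) < 2*π)).const_mul 4

lemma tendsto_SS_comp {c : ℝ} (hc : 1 ≤ c) : Tendsto (fun t : ℝ => SS (c * t)) atTop (nhds 0) :=
  tendsto_SS.comp (Tendsto.const_mul_atTop (by linarith) tendsto_id)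

lemma eta_eq {s : ℝ} (hs : 1 ≤ s) :
    dedekindEta ((s : ℂ) * Complex.I)
      = ((Real.exp (-(π * s / 12) + SS s) : ℝ) : ℂ) := by
  have h0 : 0 ≤ Real.exp (-(2 * π * s)) := (Real.exp_pos _).le
  have h1 := u_half hs
  have hexp : (π : ℂ) * Complex.I * ((s:ℂ) * Complex.I) / 12 = ((-(π * s / 12) : ℝ) : ℂ) := by
    have hI : Complex.I * Complex.I = -1 := Complex.I_mul_I
    push_cast
    linear_combination ((π : ℂ) * (s:ℂ) / 12) * hI
  have key : ∀ n : ℕ, ((1 - Real.exp (-(2 * π * s)) ^ (n+1) : ℝ) : ℂ)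
      = 1 - Complex.exp (2 * (π:ℝ) * Complex.I * ((n : ℂ) + 1) * ((s:ℂ) * Complex.I)) := by
    intro n
    have harg : 2 * (π:ℂ) * Complex.I * ((n : ℂ) + 1) * ((s:ℂ) * Complex.I)
        = ((((n+1 : ℕ) : ℝ) * (-(2 * π * s)) : ℝ) : ℂ) := by
      have hI : Complex.I * Complex.I = -1 := Complex.I_mul_I
      push_cast
      linear_combination (2 * (π:ℂ) * ((n:ℂ)+1) * (s:ℂ)) * hI
    rw [harg, ← Complex.ofReal_exp, Real.exp_nat_mul]
    push_cast
    ring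
  have hprod : (∏' n : ℕ, (1 - Complex.exp (2 * (π:ℝ) * Complex.I * ((n : ℂ) + 1) * ((s:ℂ) * Complex.I))))
      = ((Real.exp (SS s) : ℝ) : ℂ) := by
    have hP := (hasProd_one_sub h0 h1).map Complex.ofRealHom.toMonoidHom Complex.continuous_ofReal
    have hP2 : HasProd (fun n : ℕ => 1 - Complex.exp (2 * (π:ℝ) * Complex.I * ((n : ℂ) + 1) * ((s:ℂ) * Complex.I)))
        ((Real.exp (SS s) : ℝ) : ℂ) := by
      have hfun : (Complex.ofRealHom.toMonoidHom ∘ fun n : ℕ => (1:ℝ) - Real.exp (-(2*π*s)) ^ (n+1))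
          = fun n : ℕ => 1 - Complex.exp (2 * (π:ℝ) * Complex.I * ((n : ℂ) + 1) * ((s:ℂ) * Complex.I)) := by
        funext n
        simpa using key n
      rw [← hfun]
      exact hP
    exact hP2.tprod_eq
  rw [dedekindEta, hexp, hprod, ← Complex.ofReal_exp, ← Complex.ofReal_mul, ← Real.exp_add]

lemma tendsto_Cq (jn mn : ℕ) :
    Tendsto (fun t : ℝ => Cq ((jn : ℤ) + 1) (mn : ℤ) ((t : ℂ) * Complex.I)
      * ((Real.exp (2 * π * ((jn : ℝ) + 1) * t) : ℝ) : ℂ)) atTop (nhds 1) := by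
  set combo : ℝ → ℝ := fun t =>
    (10 * SS (2*t) + 5 * SS (3*t) + SS (4*t) + 2 * SS (6*t) - 15 * SS (1*t) - 3 * SS (12*t))
    + ((jn : ℝ) + 1) * (2 * SS (2*t) + SS (3*t) + 3 * SS (12*t) - 3 * SS (1*t) - SS (4*t) - 2 * SS (6*t))
    + (mn : ℝ) * (6 * SS (1*t) + SS (6*t) - 3 * SS (2*t) - 2 * SS (3*t)) with hcombo
  have h1 := tendsto_SS_comp (le_refl (1:ℝ))
  have h2 := tendsto_SS_comp (by norm_num : (1:ℝ) ≤ 2)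
  have h3 := tendsto_SS_comp (by norm_num : (1:ℝ) ≤ 3)
  have h4 := tendsto_SS_comp (by norm_num : (1:ℝ) ≤ 4)
  have h6 := tendsto_SS_comp (by norm_num : (1:ℝ) ≤ 6)
  have h12 := tendsto_SS_comp (by norm_num : (1:ℝ) ≤ 12)
  have hc : Tendsto combo atTop (nhds 0) := by
    rw [hcombo]
    have := (((((((h2.const_mul 10).add (h3.const_mul 5)).add h4).add (h6.const_mul 2)).sub
        (h1.const_mul 15)).sub (h12.const_mul 3)).add
      (((((((h2.const_mul 2).add h3).add (h12.const_mul 3)).sub (h1.const_mul 3)).sub h4).sub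
        (h6.const_mul 2)).const_mul ((jn : ℝ) + 1))).add
      (((((h1.const_mul 6).add h6).sub (h2.const_mul 3)).sub (h3.const_mul 2)).const_mul (mn : ℝ))
    simpa using this
  have hre : Tendsto (fun t : ℝ => Real.exp (combo t)) atTop (nhds 1) := by
    have := (Real.continuous_exp.tendsto 0).comp hc
    rw [Real.exp_zero] at this
    exact this
  have hC : Tendsto (fun t : ℝ => ((Real.exp (combo t) : ℝ) : ℂ)) atTop (nhds 1) := by
    rw [show (1:ℂ) = ((1:ℝ):ℂ) from by norm_num]
    exact (Complex.continuous_ofReal.tendsto 1).comp hre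
  refine hC.congr' ?_
  filter_upwards [eventually_ge_atTop (1:ℝ)] with t ht
  have e1 : dedekindEta ((t:ℂ) * Complex.I) = ((Real.exp (-(π * t / 12) + SS t) : ℝ) : ℂ) := eta_eq ht
  have r2 : (2 : ℂ) * ((t:ℂ) * Complex.I) = (((2*t : ℝ)) : ℂ) * Complex.I := by push_cast; ring
  have r3 : (3 : ℂ) * ((t:ℂ) * Complex.I) = (((3*t : ℝ)) : ℂ) * Complex.I := by push_cast; ring
  have r4 : (4 : ℂ) * ((t:ℂ) * Complex.I) = (((4*t : ℝ)) : ℂ) * Complex.I := by push_cast; ring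
  have r6 : (6 : ℂ) * ((t:ℂ) * Complex.I) = (((6*t : ℝ)) : ℂ) * Complex.I := by push_cast; ring
  have r12 : (12 : ℂ) * ((t:ℂ) * Complex.I) = (((12*t : ℝ)) : ℂ) * Complex.I := by push_cast; ring
  have e2 : dedekindEta ((2:ℂ) * ((t:ℂ) * Complex.I))
      = ((Real.exp (-(π * (2*t) / 12) + SS (2*t)) : ℝ) : ℂ) := by
    rw [r2]; exact eta_eq (by linarith)
  have e3 : dedekindEta ((3:ℂ) * ((t:ℂ) * Complex.I))
      = ((Real.exp (-(π * (3*t) / 12) + SS (3*t)) : ℝ) : ℂ) := by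
    rw [r3]; exact eta_eq (by linarith)
  have e4 : dedekindEta ((4:ℂ) * ((t:ℂ) * Complex.I))
      = ((Real.exp (-(π * (4*t) / 12) + SS (4*t)) : ℝ) : ℂ) := by
    rw [r4]; exact eta_eq (by linarith)
  have e6 : dedekindEta ((6:ℂ) * ((t:ℂ) * Complex.I))
      = ((Real.exp (-(π * (6*t) / 12) + SS (6*t)) : ℝ) : ℂ) := by
    rw [r6]; exact eta_eq (by linarith)
  have e12 : dedekindEta ((12:ℂ) * ((t:ℂ) * Complex.I))
      = ((Real.exp (-(π * (12*t) / 12) + SS (12*t)) : ℝ) : ℂ) := by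
    rw [r12]; exact eta_eq (by linarith)
  rw [Cq, e1, e2, e3, e4, e6, e12]
  rw [show ((jn : ℤ) + 1) = ((jn + 1 : ℕ) : ℤ) by push_cast; ring, zpow_natCast, zpow_natCast]
  rw [div_pow, div_pow]
  simp only [← Complex.ofReal_pow, ← Complex.ofReal_mul, ← Complex.ofReal_div]
  rw [Complex.ofReal_inj]
  simp only [← Real.exp_nat_mul, ← Real.exp_add, ← Real.exp_sub, div_eq_mul_inv, ← Real.exp_neg,
    ← Real.exp_add]
  rw [Real.exp_eq_exp]
  push_cast
  simp only [hcombo]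
  ring

lemma aux_li {n : ℕ} (F : Fin n → ℝ → ℂ)
    (hF : ∀ j : Fin n, Tendsto (fun t : ℝ => F j t
      * ((Real.exp (2 * π * ((j : ℕ) + 1 : ℝ) * t) : ℝ) : ℂ)) atTop (nhds 1))
    (g : Fin n → ℂ) :
    ∀ s : Finset (Fin n), (∀ t : ℝ, 1 ≤ t → ∑ i ∈ s, g i * F i t = 0) → ∀ i ∈ s, g i = 0 := by
  intro s
  induction s using Finset.strongInduction with
  | _ s ih =>
    intro hsum i hi
    have hne : s.Nonempty := ⟨i, hi⟩
    set m := s.min' hne with hm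
    have hms : m ∈ s := s.min'_mem hne
    set E : ℝ → ℂ := fun t => ((Real.exp (2 * π * ((m : ℕ) + 1 : ℝ) * t) : ℝ) : ℂ) with hE
    have hzero : Tendsto (fun t : ℝ => ∑ j ∈ s, g j * F j t * E t) atTop (nhds 0) := by
      have heq : (fun _ : ℝ => (0:ℂ)) =ᶠ[atTop] fun t : ℝ => ∑ j ∈ s, g j * F j t * E t := by
        filter_upwards [eventually_ge_atTop (1:ℝ)] with t ht
        rw [← Finset.sum_mul, hsum t ht, zero_mul]
      exact tendsto_const_nhds.congr' heq
    have hlim : Tendsto (fun t : ℝ => ∑ j ∈ s, g j * F j t * E t) atTop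
        (nhds (∑ j ∈ s, if j = m then g j else 0)) := by
      apply tendsto_finset_sum
      intro j hj
      by_cases hjm : j = m
      · subst hjm
        simp only [if_pos rfl]
        have := (hF m).const_mul (g m)
        simpa [mul_assoc, hE] using this
      · simp only [if_neg hjm]
        have hmj : (m : ℕ) < (j : ℕ) := by
          have hle : m ≤ j := s.min'_le j hj
          exact Fin.lt_iff_val_lt_val.mp (lt_of_le_of_ne hle (Ne.symm hjm))
        have hsplit : ∀ t : ℝ, E t
            = ((Real.exp (2 * π * ((j : ℕ) + 1 : ℝ) * t) : ℝ) : ℂ)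
              * ((Real.exp (-((2 * π * (((j : ℕ) : ℝ) - ((m : ℕ) : ℝ))) * t)) : ℝ) : ℂ) := by
          intro t
          rw [hE, ← Complex.ofReal_mul, ← Real.exp_add]
          norm_num
          ring_nf
        have hdecay : Tendsto (fun t : ℝ =>
            ((Real.exp (-((2 * π * (((j : ℕ) : ℝ) - ((m : ℕ) : ℝ))) * t)) : ℝ) : ℂ)) atTop (nhds 0) := by
          have hpos : (0:ℝ) < 2 * π * (((j : ℕ) : ℝ) - ((m : ℕ) : ℝ)) := by
            have hge : (1:ℝ) ≤ ((j : ℕ) : ℝ) - ((m : ℕ) : ℝ) := by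
              have hle1 : (m : ℕ) + 1 ≤ (j : ℕ) := hmj
              have := Nat.cast_le (α := ℝ) |>.mpr hle1
              push_cast at this
              linarith
            nlinarith [Real.pi_gt_three]
          have hr : Tendsto (fun t : ℝ => Real.exp (-(2 * π * (((j : ℕ) : ℝ) - ((m : ℕ) : ℝ)) * t)))
              atTop (nhds 0) :=
            Real.tendsto_exp_neg_atTop_nhds_zero.comp (Tendsto.const_mul_atTop hpos tendsto_id)
          rw [show (0:ℂ) = ((0:ℝ):ℂ) from by norm_num]
          exact (Complex.continuous_ofReal.tendsto 0).comp hr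
        have hterm : Tendsto (fun t : ℝ => (g j * (F j t
              * ((Real.exp (2 * π * ((j : ℕ) + 1 : ℝ) * t) : ℝ) : ℂ)))
              * ((Real.exp (-((2 * π * (((j : ℕ) : ℝ) - ((m : ℕ) : ℝ))) * t)) : ℝ) : ℂ))
            atTop (nhds 0) := by
          have := (((hF j).const_mul (g j)).mul hdecay)
          simpa using this
        refine hterm.congr ?_
        intro t
        rw [hsplit t]
        ring
    have hgm : g m = 0 := by
      have hval : (∑ j ∈ s, if j = m then g j else 0) = g m := by
        rw [Finset.sum_ite_eq' s m (fun j => g j), if_pos hms]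
      rw [hval] at hlim
      exact (tendsto_nhds_unique hlim hzero)
    by_cases him : i = m
    · rw [him]; exact hgm
    · refine ih (s.erase m) (Finset.erase_ssubset hms) ?_ i (Finset.mem_erase.mpr ⟨him, hi⟩)
      intro t ht
      have h0 := hsum t ht
      rw [← Finset.add_sum_erase s _ hms, hgm, zero_mul, zero_add] at h0
      exact h0

end CqLIAux

/-- For `k ≥ 2` the functions `C_{1,2k}, …, C_{4k−5,2k}` on the upper half plane are
linearly independent over `ℂ`. -/
theorem Cq_linearIndependent (k : ℕ) (hk : 2 ≤ k) :
    LinearIndependent ℂ (fun j : Fin (4 * k - 5) =>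
      (fun z : UpperHalfPlane => Cq ((j : ℕ) + 1) (2 * (k : ℤ)) (z : ℂ))) := by
  rw [linearIndependent_iff']
  intro s g hsum i hi
  set F : Fin (4 * k - 5) → ℝ → ℂ :=
    fun j t => Cq ((j : ℕ) + 1) (2 * (k : ℤ)) ((t : ℂ) * Complex.I) with hF
  have hFten : ∀ j : Fin (4 * k - 5), Tendsto (fun t : ℝ => F j t
      * ((Real.exp (2 * Real.pi * ((j : ℕ) + 1 : ℝ) * t) : ℝ) : ℂ)) atTop (nhds 1) := by
    intro j
    have := CqLIAux.tendsto_Cq (j : ℕ) (2 * k)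
    have hcast : ((2 * k : ℕ) : ℤ) = 2 * (k : ℤ) := by push_cast; ring
    rw [hcast] at this
    exact this
  refine CqLIAux.aux_li F hFten g s ?_ i hi
  intro t ht
  have hz : (0:ℝ) < t := by linarith
  have him : ((t : ℂ) * Complex.I).im = t := by simp
  have hzt : (0:ℝ) < ((t : ℂ) * Complex.I).im := by rw [him]; exact hz
  set zt : UpperHalfPlane := ⟨(t : ℂ) * Complex.I, hzt⟩ with hzt'
  have := congrFun hsum zt
  simpa [Finset.sum_apply, Pi.smul_apply, smul_eq_mul, hF] using this
end
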